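/- Let λ ≥ 0 be a random variable, P_peak > 0, λ_Th ≥ 0, and P_x = P_peak·1{λ ≥ λ_Th} with E[P_x] = P_avg. For any random variable P_z with 0 ≤ P_z ≤ P_peak and E[P_z] ≤ P_avg, we have E[λ·P_z] − E[λ·P_x] ≤ λ_Th·(E[P_z] − E[P_x]) ≤ 0. -/
import Mathlib

open MeasureTheory

/-- Key comparison inequality for the power-limited case: for any competing
policy `Pz` with `0 ≤ Pz ≤ P_peak` and `E[Pz] ≤ P_avg = E[Px]`,
`E[λPz] − E[λPx] ≤ λ_Th(E[Pz] − E[Px]) ≤ 0`. -/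
theorem threshold_policy_comparison {Ω : Type*} [MeasurableSpace Ω]
    (μ : Measure Ω) [IsProbabilityMeasure μ]
    (lam Pz Px : Ω → ℝ) (lamTh Ppeak Pavg : ℝ)
    (hlamTh : 0 ≤ lamTh) (hPpeak : 0 < Ppeak)
    (hlam : ∀ ω, 0 ≤ lam ω)
    (hPx : Px = fun ω => if lamTh ≤ lam ω then Ppeak else 0)
    (hPxavg : ∫ ω, Px ω ∂μ = Pavg)
    (hPz0 : ∀ ω, 0 ≤ Pz ω) (hPzpeak : ∀ ω, Pz ω ≤ Ppeak)
    (hintPz : Integrable Pz μ) (hintPx : Integrable Px μ)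
    (hintlamPz : Integrable (fun ω => lam ω * Pz ω) μ)
    (hintlamPx : Integrable (fun ω => lam ω * Px ω) μ)
    (hle : ∫ ω, Pz ω ∂μ ≤ Pavg) :
    (∫ ω, lam ω * Pz ω ∂μ) - (∫ ω, lam ω * Px ω ∂μ) ≤
        lamTh * ((∫ ω, Pz ω ∂μ) - (∫ ω, Px ω ∂μ)) ∧
      lamTh * ((∫ ω, Pz ω ∂μ) - (∫ ω, Px ω ∂μ)) ≤ 0 := by
  constructor
  · have key : ∀ ω, lam ω * Pz ω - lam ω * Px ω ≤ lamTh * Pz ω - lamTh * Px ω := by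
      intro ω
      by_cases h : lamTh ≤ lam ω
      · have hPxω : Px ω = Ppeak := by simp [hPx, h]
        have h1 : Pz ω - Px ω ≤ 0 := by rw [hPxω]; linarith [hPzpeak ω]
        nlinarith [hlam ω]
      · have hPxω : Px ω = 0 := by simp [hPx, h]
        rw [hPxω]
        nlinarith [hPz0 ω, hlam ω, le_of_lt (lt_of_not_ge h)]
    have h1 : ∫ ω, (lam ω * Pz ω - lam ω * Px ω) ∂μ ≤
        ∫ ω, (lamTh * Pz ω - lamTh * Px ω) ∂μ :=
      integral_mono (hintlamPz.sub hintlamPx)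
        ((hintPz.const_mul lamTh).sub (hintPx.const_mul lamTh)) key
    rw [integral_sub hintlamPz hintlamPx, integral_sub (hintPz.const_mul lamTh)
      (hintPx.const_mul lamTh), integral_const_mul, integral_const_mul] at h1
    linarith
  · have : (∫ ω, Pz ω ∂μ) - (∫ ω, Px ω ∂μ) ≤ 0 := by rw [hPxavg]; linarith
    exact mul_nonpos_of_nonneg_of_nonpos hlamTh this
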